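/- Let X be a nontrivial separable Banach space over ℝ, and let K be a subfield of ℝ with #K < add(𝓜_X), where add(𝓜_X) = sInf { #𝓖 : every member of 𝓖 is a meager subset of X and ⋃₀ 𝓖 is not meager in X }. Let 𝓕 ⊆ X be residual (i.e., X \ 𝓕 is meager) and star-like over K (a • f ∈ 𝓕 for every a ∈ K \ {0} and f ∈ 𝓕). Regard X as a vector space over K by restriction of scalars. Then every K-linear subspace Y of X with Y ⊆ 𝓕 ∪ {0} and dim_K Y < add(𝓜_X) is contained in a K-linear subspace W of X with W ⊆ 𝓕 ∪ {0} and dim_K W = add(𝓜_X); in particular, 𝓕 ∪ {0} contains a K-linear subspace of uncountable dimension (dimension at least ℵ₁). -/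

import Mathlib

open Cardinal

set_option synthInstance.maxHeartbeats 1000000
set_option maxHeartbeats 2000000
set_option linter.unusedSectionVars false

/-- The additivity of the σ-ideal of meager subsets of a topological space `X`: the least
cardinality of a family of meager sets whose union is not meager. -/
noncomputable def addMeagre (X : Type u) [TopologicalSpace X] : Cardinal.{u} :=
  sInf {c : Cardinal.{u} |
    ∃ 𝓖 : Set (Set X), (∀ A ∈ 𝓖, IsMeagre A) ∧ ¬ IsMeagre (⋃₀ 𝓖) ∧ #𝓖 = c}

section Aux

open Set

variable {X : Type u} [NormedAddCommGroup X] [NormedSpace ℝ X] [Nontrivial X]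

lemma AuxMeagre.not_univ [CompleteSpace X] : ¬ IsMeagre (Set.univ : Set X) := by
  intro h
  have h2 : (∅ : Set X) ∈ residual X := by simpa [IsMeagre] using h
  exact Set.not_nonempty_empty (dense_of_mem_residual h2).nonempty

lemma AuxMeagre.singleton (x : X) : IsMeagre ({x} : Set X) := by
  have := Module.punctured_nhds_neBot ℝ X x
  show {x}ᶜ ∈ residual X
  exact residual_of_dense_open isOpen_compl_singleton (dense_compl_singleton x)

lemma AuxMeagre.sUnion_countable {𝓖 : Set (Set X)} (hc : 𝓖.Countable)
    (h : ∀ A ∈ 𝓖, IsMeagre A) : IsMeagre (⋃₀ 𝓖) := by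
  rw [IsMeagre, Set.compl_sUnion]
  refine (countable_sInter_mem (hc.image _)).2 ?_
  rintro t ⟨A, hA, rfl⟩
  exact h A hA

lemma AuxMeagre.iUnion {ι : Type u} (f : ι → Set X) (hf : ∀ i, IsMeagre (f i))
    (h : #ι < addMeagre X) : IsMeagre (⋃ i, f i) := by
  by_contra hm
  have h1 : addMeagre X ≤ #(Set.range f) :=
    csInf_le' ⟨Set.range f, by rintro A ⟨i, rfl⟩; exact hf i, by rwa [Set.sUnion_range], rfl⟩
  exact absurd (h1.trans Cardinal.mk_range_le) (not_le.2 h)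

lemma AuxMeagre.aleph0_lt [CompleteSpace X] : ℵ₀ < addMeagre X := by
  have hne : {c : Cardinal.{u} |
      ∃ 𝓖 : Set (Set X), (∀ A ∈ 𝓖, IsMeagre A) ∧ ¬ IsMeagre (⋃₀ 𝓖) ∧ #𝓖 = c}.Nonempty := by
    refine ⟨_, Set.range (fun x : X => ({x} : Set X)), ?_, ?_, rfl⟩
    · rintro A ⟨x, rfl⟩; exact AuxMeagre.singleton x
    · have : ⋃₀ Set.range (fun x : X => ({x} : Set X)) = Set.univ := by
        ext y; simp
      rw [this]
      exact AuxMeagre.not_univ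
  obtain ⟨𝓖, h1, h2, h3⟩ := csInf_mem hne
  rw [show addMeagre X = #𝓖 from h3.symm]
  by_contra hle
  exact h2 (AuxMeagre.sUnion_countable (Cardinal.mk_le_aleph0_iff.1 (not_lt.1 hle)) h1)

lemma AuxMeagre.small (s : Set X) (h : #s < addMeagre X) : IsMeagre s := by
  have : s = ⋃ x : s, ({(x : X)} : Set X) := by
    ext y; simp
  rw [this]
  exact AuxMeagre.iUnion _ (fun x => AuxMeagre.singleton _) h

lemma AuxMeagre.mk_submodule_lt [CompleteSpace X] (K : Subfield ℝ)
    (hK : Cardinal.lift.{u} #K < addMeagre X)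
    (Z : Submodule K X) (hZ : Module.rank K Z < addMeagre X) : #Z < addMeagre X := by
  have hb : #Z = #(Module.Free.ChooseBasisIndex K Z →₀ K) :=
    Cardinal.mk_congr (Module.Free.chooseBasis K Z).repr.toEquiv
  rw [hb]
  rcases isEmpty_or_nonempty (Module.Free.ChooseBasisIndex K Z) with hE | hN
  · have hsub : Subsingleton (Module.Free.ChooseBasisIndex K Z →₀ K) :=
      ⟨fun f g => Finsupp.ext fun i => (IsEmpty.false i).elim⟩
    exact lt_of_le_of_lt (Cardinal.le_one_iff_subsingleton.2 hsub)
      (lt_trans one_lt_aleph0 (AuxMeagre.aleph0_lt))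
  · have hKinf : Infinite K := inferInstance
    rw [Cardinal.mk_finsupp_lift_of_infinite']
    rw [Cardinal.lift_id']
    apply max_lt _ hK
    rwa [← Module.Free.rank_eq_card_chooseBasisIndex]

lemma AuxMeagre.step [CompleteSpace X] (K : Subfield ℝ)
    (hK : Cardinal.lift.{u} #K < addMeagre X)
    (𝓕 : Set X) (hres : IsMeagre 𝓕ᶜ)
    (Z : Submodule K X) (hr : Module.rank K Z < addMeagre X) :
    ∃ x : X, x ∉ Z ∧ ∀ a : K, a ≠ 0 → ∀ y ∈ Z, (a : ℝ) • x + y ∈ 𝓕 := by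
  classical
  set g : K × Z → Set X := fun p =>
    if p.1 = 0 then ∅ else {x : X | (p.1 : ℝ) • x + (p.2 : X) ∉ 𝓕} with hg
  have hgm : ∀ p, IsMeagre (g p) := by
    rintro ⟨a, y⟩
    by_cases ha : a = 0
    · simp [hg, ha, IsMeagre.empty]
    · have ha' : (a : ℝ) ≠ 0 := by
        exact_mod_cast fun h => ha (Subtype.ext h)
      let e : X ≃ₜ X := (Homeomorph.smulOfNeZero (a : ℝ) ha').trans
        (Homeomorph.addRight (y : X))
      have hset : g (a, y) = e ⁻¹' 𝓕ᶜ := by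
        ext x
        simp [hg, ha, e, Homeomorph.smulOfNeZero]
      rw [hset]
      exact hres.preimage_of_isOpenMap e.continuous e.isOpenMap
  have hZm : IsMeagre (Z : Set X) :=
    AuxMeagre.small _ (AuxMeagre.mk_submodule_lt K hK Z hr)
  have hUm : IsMeagre (⋃ p, g p) := by
    apply AuxMeagre.iUnion _ hgm
    have : #(K × Z) = Cardinal.lift.{u} #K * #Z := by
      rw [Cardinal.mk_prod, Cardinal.lift_id']
    rw [this]
    exact Cardinal.mul_lt_of_lt AuxMeagre.aleph0_lt.le hK
      (AuxMeagre.mk_submodule_lt K hK Z hr)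
  have hbad : IsMeagre ((Z : Set X) ∪ ⋃ p, g p) := by
    rw [IsMeagre, Set.compl_union]
    exact Filter.inter_mem hZm hUm
  have hex : ∃ x : X, x ∉ (Z : Set X) ∪ ⋃ p, g p := by
    by_contra hall
    push_neg at hall
    apply AuxMeagre.not_univ (X := X)
    refine hbad.mono ?_
    intro x _
    exact hall x
  obtain ⟨x, hx⟩ := hex
  rw [Set.mem_union, not_or] at hx
  refine ⟨x, hx.1, fun a ha y hy => ?_⟩
  by_contra hmem
  apply hx.2
  rw [Set.mem_iUnion]
  refine ⟨(a, ⟨y, hy⟩), ?_⟩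
  simp [hg, ha, hmem]

end Aux

/-- **Theorem.** Let `X` be a nontrivial separable Banach space, `K ⊆ ℝ` a subfield with
`#K < add(𝓜_X)`, and `𝓕 ⊆ X` a residual star-like family (over `K`). Viewing `X` as a
`K`-vector space, every `K`-subspace of `𝓕 ∪ {0}` of dimension `< add(𝓜_X)` extends to a
`K`-subspace of `𝓕 ∪ {0}` of dimension exactly `add(𝓜_X)`; in particular `𝓕 ∪ {0}`
contains a `K`-subspace of uncountable dimension. -/
theorem residual_starLike_homLineable {X : Type u} [NormedAddCommGroup X]
    [NormedSpace ℝ X] [CompleteSpace X] [TopologicalSpace.SeparableSpace X] [Nontrivial X]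
    (K : Subfield ℝ) (hK : Cardinal.lift.{u} #K < addMeagre X)
    (𝓕 : Set X) (hres : IsMeagre 𝓕ᶜ)
    (hstar : ∀ a : K, a ≠ 0 → ∀ f ∈ 𝓕, (a : ℝ) • f ∈ 𝓕) :
    (∀ Y : Submodule K X, (Y : Set X) ⊆ 𝓕 ∪ {0} → Module.rank K Y < addMeagre X →
      ∃ W : Submodule K X, Y ≤ W ∧ (W : Set X) ⊆ 𝓕 ∪ {0} ∧
        Module.rank K W = addMeagre X) ∧
    ∃ W : Submodule K X, (W : Set X) ⊆ 𝓕 ∪ {0} ∧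
      Cardinal.aleph 1 ≤ Module.rank K W := by
  have κpos := AuxMeagre.aleph0_lt (X := X)
  have main : ∀ Y : Submodule K X, (Y : Set X) ⊆ 𝓕 ∪ {0} → Module.rank K Y < addMeagre X →
      ∃ W : Submodule K X, Y ≤ W ∧ (W : Set X) ⊆ 𝓕 ∪ {0} ∧
        Module.rank K W = addMeagre X := by
    intro Y hY hYr
    -- Zorn's lemma on subspaces of 𝓕 ∪ {0} containing Y
    obtain ⟨M, hYM, hM⟩ := zorn_le_nonempty₀
      {Z : Submodule K X | (Z : Set X) ⊆ 𝓕 ∪ {0}} (fun c hc hchain Z₀ hZ₀ => by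
        refine ⟨sSup c, ?_, fun z hz => le_sSup hz⟩
        intro x hx
        rw [SetLike.mem_coe, Submodule.mem_sSup_of_directed ⟨Z₀, hZ₀⟩
          hchain.directedOn] at hx
        obtain ⟨Z, hZc, hxZ⟩ := hx
        exact hc hZc hxZ) Y hY
    -- M has rank at least addMeagre X
    have hMr : addMeagre X ≤ Module.rank K M := by
      by_contra hlt
      obtain ⟨x, hxM, hxg⟩ := AuxMeagre.step K hK 𝓕 hres M (not_le.1 hlt)
      have hsub : ((M ⊔ Submodule.span K {x} : Submodule K X) : Set X) ⊆ 𝓕 ∪ {0} := by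
        intro z hz
        rw [SetLike.mem_coe, Submodule.mem_sup] at hz
        obtain ⟨y, hy, c, hc, rfl⟩ := hz
        rw [Submodule.mem_span_singleton] at hc
        obtain ⟨b, rfl⟩ := hc
        by_cases hb : b = 0
        · subst hb
          rw [zero_smul, add_zero]
          exact hM.1 hy
        · left
          have : y + b • x = (b : ℝ) • x + y := by
            rw [add_comm]; rfl
          rw [this]
          exact hxg b hb y hy
      have hle : M ≤ M ⊔ Submodule.span K {x} := le_sup_left
      have hge := hM.2 hsub hle
      apply hxM
      exact hge (Submodule.mem_sup_right (Submodule.mem_span_singleton_self x))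
    -- select a subspace of the right dimension between Y and M
    set ι := Module.Basis.ofVectorSpaceIndex K M
    set b := Module.Basis.ofVectorSpace K M
    have hι : #ι = Module.rank K M := b.mk_eq_rank''
    obtain ⟨s, hs⟩ : ∃ s : Set ι, #s = addMeagre X :=
      Cardinal.le_mk_iff_exists_set.1 (hι ▸ hMr)
    set v : s → X := fun i => ((b i : M) : X) with hv
    have hli : LinearIndependent K v := by
      have h1 : LinearIndependent K (fun i : ι => ((b i : M) : X)) :=
        b.linearIndependent.map' M.subtype (Submodule.ker_subtype M)
      exact h1.comp (fun i : s => (i : ι)) Subtype.val_injective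
    set W := Y ⊔ Submodule.span K (Set.range v) with hW
    have hWM : W ≤ M := by
      apply sup_le hYM
      rw [Submodule.span_le]
      rintro _ ⟨i, rfl⟩
      exact (b i).2
    have hrank_span : Module.rank K (Submodule.span K (Set.range v)) = addMeagre X := by
      rw [rank_span hli, Cardinal.mk_range_eq v hli.injective]
      exact hs
    refine ⟨W, le_sup_left, fun z hz => hM.1 (hWM hz), ?_⟩
    apply le_antisymm
    · calc Module.rank K W ≤ Module.rank K Y + Module.rank K (Submodule.span K (Set.range v)) :=
            Submodule.rank_add_le_rank_add_rank _ _
        _ = Module.rank K Y + addMeagre X := by rw [hrank_span]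
        _ = addMeagre X := Cardinal.add_eq_right κpos.le hYr.le
    · rw [← hrank_span]
      exact Submodule.rank_mono le_sup_right
  refine ⟨main, ?_⟩
  obtain ⟨W, _, hW𝓕, hWr⟩ := main ⊥ (by
      intro x hx
      right
      simpa using hx)
    (by rw [rank_bot]; exact lt_trans Cardinal.aleph0_pos κpos)
  refine ⟨W, hW𝓕, ?_⟩
  rw [hWr, ← Cardinal.succ_aleph0]
  exact Order.succ_le_of_lt κpos
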